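/- arXiv:2103.01174 — 5 statements merged into one kernel-verified Lean document; each statement's English description precedes it below -/
import Mathlib

section
/- In the Iwahori–Hecke algebra of a Coxeter group W over ℤ[q] with standard basis {T_w}, each structure constant N_{w,w',w''} (defined by T_w T_{w'} = Σ_{w''} N_{w,w',w''} T_{w''}) is a polynomial in q and q−1 with nonnegative integer coefficients. -/
open Polynomial

/-- The structure constants of the Iwahori–Hecke algebra: `heckeN T w w' w''` is the
coefficient of `T w''` in `T w * T w'`. -/
noncomputable def heckeN {W H : Type*} [Group W] [Ring H] [Algebra (Polynomial ℤ) H]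
    (T : Module.Basis W (Polynomial ℤ) H) (w w' w'' : W) : Polynomial ℤ :=
  T.repr (T w * T w') w''

variable {B W H : Type*} [Group W] {M : CoxeterMatrix B}

namespace HeckeAux

/-- The predicate of being a nonnegative-integer combination of `X ^ i * (X-1) ^ j`. -/
def R (p : Polynomial ℤ) : Prop :=
  ∃ c : (ℕ × ℕ) →₀ ℕ, p = c.sum (fun p a => (a : Polynomial ℤ) * X ^ p.1 * (X - 1) ^ p.2)

lemma R_zero : R 0 := ⟨0, by simp⟩

lemma R_one : R 1 :=
  ⟨Finsupp.single (0, 0) 1, by rw [Finsupp.sum_single_index (by simp)]; simp⟩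

lemma R_add {a b : Polynomial ℤ} (ha : R a) (hb : R b) : R (a + b) := by
  obtain ⟨c1, rfl⟩ := ha
  obtain ⟨c2, rfl⟩ := hb
  exact ⟨c1 + c2, (Finsupp.sum_add_index' (fun p => by simp)
    (fun p x y => by push_cast; ring)).symm⟩

lemma R_Xmul {a : Polynomial ℤ} (ha : R a) : R (X * a) := by
  obtain ⟨c, rfl⟩ := ha
  refine ⟨c.mapDomain (fun p => (p.1 + 1, p.2)), ?_⟩
  rw [Finsupp.sum_mapDomain_index (fun p => by simp) (fun p x y => by push_cast; ring),
    Finsupp.mul_sum]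
  exact Finsupp.sum_congr fun p _ => by ring

lemma R_Xsub1mul {a : Polynomial ℤ} (ha : R a) : R ((X - 1) * a) := by
  obtain ⟨c, rfl⟩ := ha
  refine ⟨c.mapDomain (fun p => (p.1, p.2 + 1)), ?_⟩
  rw [Finsupp.sum_mapDomain_index (fun p => by simp) (fun p x y => by push_cast; ring),
    Finsupp.mul_sum]
  exact Finsupp.sum_congr fun p _ => by ring

lemma R_finsetSum {ι : Type*} (s : Finset ι) (g : ι → Polynomial ℤ)
    (h : ∀ i ∈ s, R (g i)) : R (∑ i ∈ s, g i) :=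
  Finset.sum_induction g R (fun _ _ => R_add) R_zero h

end HeckeAux

open HeckeAux in
/-- Each structure constant of the Iwahori–Hecke algebra is a polynomial in `q` and
`q - 1` with nonnegative integer coefficients. -/
theorem stmt_0 (cs : CoxeterSystem M W)
    [Ring H] [Algebra (Polynomial ℤ) H] (T : Module.Basis W (Polynomial ℤ) H)
    (hone : T 1 = 1)
    (hmul : ∀ y y' : W, cs.length (y * y') = cs.length y + cs.length y' →
      T y * T y' = T (y * y'))
    (hquad : ∀ i : B, (T (cs.simple i) + 1) *
      (T (cs.simple i) - algebraMap (Polynomial ℤ) H X) = 0)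
    (w w' w'' : W) :
    ∃ c : (ℕ × ℕ) →₀ ℕ,
      heckeN T w w' w'' =
        c.sum (fun p a => (a : Polynomial ℤ) * X ^ p.1 * (X - 1) ^ p.2) := by
  suffices h : ∀ n : ℕ, ∀ w : W, cs.length w = n →
      ∀ w' w'' : W, R (T.repr (T w * T w') w'') from h (cs.length w) w rfl w' w''
  intro n
  induction n with
  | zero =>
    intro w hw w' w''
    rw [cs.length_eq_zero_iff] at hw
    subst hw
    rw [hone, one_mul, T.repr_self]
    by_cases h : w' = w''
    · simpa [Finsupp.single_apply, h] using R_one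
    · simpa [Finsupp.single_apply, h] using R_zero
  | succ n ih =>
    intro w hw w' w''
    have hw1 : w ≠ 1 := by
      rintro rfl
      rw [cs.length_one] at hw
      omega
    obtain ⟨i, hi⟩ := cs.exists_leftDescent_of_ne_one hw1
    set σ := cs.simple i with hσ
    set v := σ * w with hv
    have hsv : σ * v = w := by rw [hv, hσ, ← mul_assoc, cs.simple_mul_simple_self, one_mul]
    have hlv : cs.length v + 1 = cs.length w := cs.isLeftDescent_iff.mp hi
    have hlvn : cs.length v = n := by omega
    have hTw : T w = T σ * T v := by
      rw [hmul σ v (by rw [hsv, hσ, cs.length_simple, hw, hlvn]; omega), hsv]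
    rw [hTw, mul_assoc]
    set x := T v * T w' with hx
    -- expand x in the basis
    have hexp : T σ * x = (T.repr x).sum (fun u a => a • (T σ * T u)) := by
      conv_lhs => rw [← T.linearCombination_repr x]
      rw [Finsupp.linearCombination_apply, Finsupp.mul_sum]
      exact Finsupp.sum_congr fun u _ => by rw [mul_smul_comm]
    rw [hexp, map_finsuppSum, Finsupp.sum_apply]
    rw [Finsupp.sum]
    apply R_finsetSum
    intro u hu
    have hdu : R (T.repr x u) := ih v hlvn w' u
    have hrs : T.repr ((T.repr x) u • (T σ * T u)) w'' =
        (T.repr x) u * T.repr (T σ * T u) w'' := by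
      rw [LinearEquiv.map_smul, Finsupp.smul_apply, smul_eq_mul]
    rw [hrs, mul_comm]
    -- now analyze T σ * T u
    by_cases hdesc : cs.IsLeftDescent u i
    · -- descent case: T σ * T u = X • T (σ * u) + (X - 1) • T u
      set u' := σ * u with hu'
      have hsu' : σ * u' = u := by rw [hu', hσ, ← mul_assoc, cs.simple_mul_simple_self, one_mul]
      have hlu' : cs.length u' + 1 = cs.length u := cs.isLeftDescent_iff.mp hdesc
      have h1 : T σ * T u' = T u := by
        rw [hmul σ u' (by rw [hsu', hσ, cs.length_simple]; omega), hsu']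
      have hsq : T σ * T σ = (X : Polynomial ℤ) • T σ - T σ + (X : Polynomial ℤ) • (1 : H) := by
        have := hquad i
        rw [← hσ] at this
        have hc : T σ * algebraMap (Polynomial ℤ) H X = (X : Polynomial ℤ) • T σ := by
          rw [← Algebra.commutes, Algebra.smul_def]
        have h2 : T σ * T σ - (X : Polynomial ℤ) • T σ + T σ - (X : Polynomial ℤ) • (1 : H) = 0 := by
          have expand : (T σ + 1) * (T σ - algebraMap (Polynomial ℤ) H X) =
              T σ * T σ - T σ * algebraMap (Polynomial ℤ) H X + T σ -
                algebraMap (Polynomial ℤ) H X := by noncomm_ring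
          have hA : algebraMap (Polynomial ℤ) H X = (X : Polynomial ℤ) • (1 : H) := by
            rw [Algebra.smul_def, mul_one]
          rw [expand, hc, hA] at this
          exact this
        linear_combination (norm := module) h2
      have hkey : T σ * T u = (X : Polynomial ℤ) • T u' + ((X : Polynomial ℤ) - 1) • T u := by
        calc T σ * T u = T σ * (T σ * T u') := by rw [h1]
          _ = (T σ * T σ) * T u' := by rw [mul_assoc]
          _ = ((X : Polynomial ℤ) • T σ - T σ + (X : Polynomial ℤ) • (1 : H)) * T u' := by rw [hsq]
          _ = (X : Polynomial ℤ) • (T σ * T u') - T σ * T u' + (X : Polynomial ℤ) • T u' := by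
              rw [add_mul, sub_mul, smul_mul_assoc, smul_mul_assoc, one_mul]
          _ = (X : Polynomial ℤ) • T u' + ((X : Polynomial ℤ) - 1) • T u := by rw [h1]; module
      rw [hkey, map_add, map_smul, map_smul, T.repr_self, T.repr_self]
      rw [Finsupp.add_apply, Finsupp.smul_apply, Finsupp.smul_apply, smul_eq_mul, smul_eq_mul,
        add_mul]
      apply R_add
      · by_cases h : u' = w''
        · simpa [Finsupp.single_apply, h] using R_Xmul hdu
        · simpa [Finsupp.single_apply, h] using R_zero
      · by_cases h : u = w''
        · simpa [Finsupp.single_apply, h] using R_Xsub1mul hdu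
        · simpa [Finsupp.single_apply, h] using R_zero
    · -- non-descent case: T σ * T u = T (σ * u)
      have hlen : cs.length (σ * u) = cs.length σ + cs.length u := by
        have h2 := cs.not_isLeftDescent_iff.mp hdesc
        rw [hσ, cs.length_simple]
        omega
      rw [hmul σ u hlen, T.repr_self]
      by_cases h : σ * u = w''
      · simpa [Finsupp.single_apply, h] using hdu
      · simpa [Finsupp.single_apply, h] using R_zero
end

section
/- If W is a finite Coxeter group with longest element w₀, then for every w ∈ W the structure constant N_{w,w₀,w₀} of the Iwahori–Hecke algebra is nonzero; in particular the set 𝔈(w) = {z ∈ W : N_{w,z,z} ≠ 0} is nonempty and contains w₀. -/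
open Polynomial

variable {B W H : Type*} [Group W] {M : CoxeterMatrix B}

section Aux

variable [Ring H] [Algebra (Polynomial ℤ) H] (cs : CoxeterSystem M W)
  (T : Module.Basis W (Polynomial ℤ) H)

private lemma aux_mul_asc
    (hmul : ∀ y y' : W, cs.length (y * y') = cs.length y + cs.length y' →
      T y * T y' = T (y * y'))
    {i : B} {u : W} (h : ¬ cs.IsLeftDescent u i) :
    T (cs.simple i) * T u = T (cs.simple i * u) := by
  apply hmul
  rw [cs.not_isLeftDescent_iff.mp h, cs.length_simple, add_comm]

private lemma aux_mul_desc
    (hmul : ∀ y y' : W, cs.length (y * y') = cs.length y + cs.length y' →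
      T y * T y' = T (y * y'))
    (hquad : ∀ i : B, (T (cs.simple i) + 1) *
      (T (cs.simple i) - algebraMap (Polynomial ℤ) H X) = 0)
    {i : B} {u : W} (h : cs.IsLeftDescent u i) :
    T (cs.simple i) * T u
      = (X - 1 : Polynomial ℤ) • T u + (X : Polynomial ℤ) • T (cs.simple i * u) := by
  have h2 : ¬ cs.IsLeftDescent (cs.simple i * u) i :=
    (cs.isLeftDescent_iff_not_isLeftDescent_mul).mp h
  have hsu : T (cs.simple i) * T (cs.simple i * u) = T u := by
    have := aux_mul_asc cs T hmul h2
    rwa [cs.simple_mul_simple_cancel_left] at this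
  have hq := hquad i
  have h0 : (T (cs.simple i) + 1) * (T (cs.simple i) - algebraMap (Polynomial ℤ) H X)
      = T (cs.simple i) * T (cs.simple i)
        - (T (cs.simple i) * algebraMap (Polynomial ℤ) H X
            + algebraMap (Polynomial ℤ) H X - T (cs.simple i)) := by
    noncomm_ring
  rw [h0, sub_eq_zero] at hq
  calc T (cs.simple i) * T u
      = T (cs.simple i) * (T (cs.simple i) * T (cs.simple i * u)) := by rw [hsu]
    _ = (T (cs.simple i) * T (cs.simple i)) * T (cs.simple i * u) := by
        rw [mul_assoc]
    _ = (T (cs.simple i) * algebraMap (Polynomial ℤ) H X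
          + algebraMap (Polynomial ℤ) H X - T (cs.simple i)) * T (cs.simple i * u) := by
        rw [hq]
    _ = (X : Polynomial ℤ) • (T (cs.simple i) * T (cs.simple i * u))
          + (X : Polynomial ℤ) • T (cs.simple i * u) - T (cs.simple i) * T (cs.simple i * u) := by
        rw [← Algebra.commutes, Algebra.smul_def, Algebra.smul_def]
        noncomm_ring
    _ = (X - 1 : Polynomial ℤ) • T u + (X : Polynomial ℤ) • T (cs.simple i * u) := by
        rw [hsu, sub_smul, one_smul]
        abel

private lemma aux_nonneg
    (hmul : ∀ y y' : W, cs.length (y * y') = cs.length y + cs.length y' →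
      T y * T y' = T (y * y'))
    (hquad : ∀ i : B, (T (cs.simple i) + 1) *
      (T (cs.simple i) - algebraMap (Polynomial ℤ) H X) = 0)
    (i : B) (u z : W) :
    0 ≤ eval 2 (T.repr (T (cs.simple i) * T u) z) := by
  classical
  by_cases h : cs.IsLeftDescent u i
  · rw [aux_mul_desc cs T hmul hquad h, map_add, map_smul, map_smul, Finsupp.add_apply,
      Finsupp.smul_apply, Finsupp.smul_apply, T.repr_self, T.repr_self]
    simp only [Finsupp.single_apply, smul_eq_mul]
    split_ifs <;> simp <;> norm_num
  · rw [aux_mul_asc cs T hmul h, T.repr_self]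
    simp only [Finsupp.single_apply]
    split_ifs <;> norm_num

private lemma aux_desc_val
    (hmul : ∀ y y' : W, cs.length (y * y') = cs.length y + cs.length y' →
      T y * T y' = T (y * y'))
    (hquad : ∀ i : B, (T (cs.simple i) + 1) *
      (T (cs.simple i) - algebraMap (Polynomial ℤ) H X) = 0)
    {i : B} {u : W} (h : cs.IsLeftDescent u i) :
    T.repr (T (cs.simple i) * T u) u = X - 1 := by
  classical
  have hne : cs.simple i * u ≠ u := by
    intro e
    have := h
    rw [CoxeterSystem.IsLeftDescent, e] at this
    exact lt_irrefl _ this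
  rw [aux_mul_desc cs T hmul hquad h, map_add, map_smul, map_smul, Finsupp.add_apply,
    Finsupp.smul_apply, Finsupp.smul_apply, T.repr_self, T.repr_self]
  simp [Finsupp.single_apply, hne]

private lemma aux_main [Fintype W]
    (hone : T 1 = 1)
    (hmul : ∀ y y' : W, cs.length (y * y') = cs.length y + cs.length y' →
      T y * T y' = T (y * y'))
    (hquad : ∀ i : B, (T (cs.simple i) + 1) *
      (T (cs.simple i) - algebraMap (Polynomial ℤ) H X) = 0)
    (w₀ : W) (hw₀ : ∀ u : W, cs.length u ≤ cs.length w₀) :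
    ∀ n : ℕ, ∀ w : W, cs.length w ≤ n →
      (∀ z : W, 0 ≤ eval 2 (T.repr (T w * T w₀) z)) ∧
      1 ≤ eval 2 (T.repr (T w * T w₀) w₀) := by
  classical
  have base : ∀ w : W, w = 1 →
      (∀ z : W, 0 ≤ eval 2 (T.repr (T w * T w₀) z)) ∧
      1 ≤ eval 2 (T.repr (T w * T w₀) w₀) := by
    rintro w rfl
    rw [hone, one_mul, T.repr_self]
    constructor
    · intro z
      simp only [Finsupp.single_apply]
      split_ifs <;> norm_num
    · simp
  intro n
  induction n with
  | zero =>
    intro w hw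
    exact base w (cs.length_eq_zero_iff.mp (Nat.le_zero.mp hw))
  | succ n ih =>
    intro w hw
    by_cases h1 : w = 1
    · exact base w h1
    · obtain ⟨i, hi⟩ := cs.exists_leftDescent_of_ne_one h1
      set v := cs.simple i * w with hv
      have hvw : w = cs.simple i * v := by
        rw [hv, cs.simple_mul_simple_cancel_left]
      have hlen : cs.length v + 1 = cs.length w := cs.isLeftDescent_iff.mp hi
      have hvn : cs.length v ≤ n := by omega
      obtain ⟨ih1, ih2⟩ := ih v hvn
      have hTw : T w = T (cs.simple i) * T v := by
        rw [hvw]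
        exact (hmul _ _ (by rw [← hvw, cs.length_simple]; omega)).symm
      have hx : T v * T w₀ = ∑ u : W, (T.repr (T v * T w₀)) u • T u := (T.sum_repr _).symm
      have hprod : T w * T w₀
          = ∑ u : W, (T.repr (T v * T w₀)) u • (T (cs.simple i) * T u) := by
        conv_lhs => rw [hTw, mul_assoc, hx]
        rw [Finset.mul_sum]
        simp_rw [mul_smul_comm]
      have hrep : ∀ z : W, T.repr (T w * T w₀) z
          = ∑ u : W, (T.repr (T v * T w₀)) u * T.repr (T (cs.simple i) * T u) z := by
        intro z
        rw [hprod, map_sum, Finsupp.finset_sum_apply]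
        simp_rw [map_smul, Finsupp.smul_apply, smul_eq_mul]
      have hterm : ∀ z u : W,
          0 ≤ eval 2 ((T.repr (T v * T w₀)) u * T.repr (T (cs.simple i) * T u) z) := by
        intro z u
        rw [eval_mul]
        exact mul_nonneg (ih1 u) (aux_nonneg cs T hmul hquad i u z)
      constructor
      · intro z
        rw [hrep z, eval_finset_sum]
        exact Finset.sum_nonneg fun u _ => hterm z u
      · rw [hrep w₀, eval_finset_sum]
        have hd : cs.IsLeftDescent w₀ i :=
          lt_of_le_of_ne (hw₀ _) (cs.length_simple_mul_ne w₀ i)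
        calc (1 : ℤ)
            ≤ eval 2 ((T.repr (T v * T w₀)) w₀ * T.repr (T (cs.simple i) * T w₀) w₀) := by
              rw [aux_desc_val cs T hmul hquad hd, eval_mul]
              simp only [eval_sub, eval_X, eval_one]
              linarith [ih2]
          _ ≤ ∑ u : W,
              eval 2 ((T.repr (T v * T w₀)) u * T.repr (T (cs.simple i) * T u) w₀) :=
              Finset.single_le_sum (fun u _ => hterm w₀ u) (Finset.mem_univ w₀)

end Aux

/-- In a finite Coxeter group with longest element `w₀`, for every `w` the structure
constant `N_{w,w₀,w₀}` is nonzero; in particular `w₀ ∈ 𝔈(w)`. -/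
theorem stmt_1 [Fintype W] (cs : CoxeterSystem M W)
    [Ring H] [Algebra (Polynomial ℤ) H] (T : Module.Basis W (Polynomial ℤ) H)
    (hone : T 1 = 1)
    (hmul : ∀ y y' : W, cs.length (y * y') = cs.length y + cs.length y' →
      T y * T y' = T (y * y'))
    (hquad : ∀ i : B, (T (cs.simple i) + 1) *
      (T (cs.simple i) - algebraMap (Polynomial ℤ) H X) = 0)
    (w₀ : W) (hw₀ : ∀ u : W, cs.length u ≤ cs.length w₀)
    (w : W) :
    heckeN T w w₀ w₀ ≠ 0 := by
  intro h
  have h2 := (aux_main cs T hone hmul hquad w₀ hw₀ (cs.length w) w le_rfl).2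
  rw [heckeN] at h
  rw [h, eval_zero] at h2
  linarith
end

section
/- Let W be the infinite dihedral Coxeter group with generators s₁, s₂ (s₁² = s₂² = 1, no other relations). For w = (s₁s₂)^k with k ≥ 1, the set 𝔈(w) = {z ∈ W : N_{w,z,z} ≠ 0} is empty. -/
open Polynomial

variable {B W H : Type*} [Group W] {M : CoxeterMatrix B}

namespace Stmt7Aux

/-- reflection t ↦ -1 - t -/
def permA : Equiv.Perm ℤ := Function.Involutive.toPerm (fun t => -1 - t) (fun t => by ring)
/-- reflection t ↦ 1 - t -/
def permB : Equiv.Perm ℤ := Function.Involutive.toPerm (fun t => 1 - t) (fun t => by ring)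

variable {W : Type*} [Group W] {M : CoxeterMatrix (Fin 2)}

def permF : Fin 2 → Equiv.Perm ℤ := ![permA, permB]

theorem liftable (hM : M 0 1 = 0) : M.IsLiftable permF := by
  have h10 : M 1 0 = 0 := (M.symmetric 0 1).symm.trans hM
  have hAA : permA * permA = 1 := by
    ext t; simp [permA, Function.Involutive.toPerm, Equiv.Perm.mul_apply]
  have hBB : permB * permB = 1 := by
    ext t; simp [permB, Function.Involutive.toPerm, Equiv.Perm.mul_apply]
  have h2 : ∀ j : Fin 2, j = 0 ∨ j = 1 := by decide
  intro i i'
  rcases h2 i with rfl | rfl <;> rcases h2 i' with rfl | rfl <;>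
    simp [permF, M.diagonal, hM, h10, hAA, hBB]

variable (cs : CoxeterSystem M W)

/-- The alcove label of an element of the infinite dihedral group. -/
noncomputable def lab (hM : M 0 1 = 0) (x : W) : ℤ :=
  (cs.lift ⟨permF, liftable hM⟩ x) 0

variable (hM : M 0 1 = 0)

theorem lab_one : lab cs hM 1 = 0 := by simp [lab]

theorem lab_a (x : W) : lab cs hM (cs.simple 0 * x) = -1 - lab cs hM x := by
  simp only [lab, map_mul, cs.lift_apply_simple]
  simp [permF, permA, Function.Involutive.toPerm, Equiv.Perm.mul_apply]

theorem lab_b (x : W) : lab cs hM (cs.simple 1 * x) = 1 - lab cs hM x := by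
  simp only [lab, map_mul, cs.lift_apply_simple]
  simp [permF, permB, Function.Involutive.toPerm, Equiv.Perm.mul_apply]

theorem main (x : W) : cs.length x = (lab cs hM x).natAbs ∧
    (lab cs hM x < 0 → cs.length (cs.simple 0 * x) < cs.length x) ∧
    (0 < lab cs hM x → cs.length (cs.simple 1 * x) < cs.length x) := by
  set n := cs.length x with hn
  clear_value n
  induction n using Nat.strong_induction_on generalizing x with
  | _ n IH =>
    rcases eq_or_ne x 1 with rfl | hx1
    · have h0 : cs.length (1 : W) = 0 := cs.length_one
      rw [lab_one]
      refine ⟨by omega, fun h => absurd h (by norm_num), fun h => absurd h (by norm_num)⟩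
    · obtain ⟨i, hi⟩ := cs.exists_leftDescent_of_ne_one hx1
      have hy : cs.length (cs.simple i * x) + 1 = cs.length x := (cs.isLeftDescent_iff).mp hi
      have hxy : x = cs.simple i * (cs.simple i * x) :=
        (cs.simple_mul_simple_cancel_left i).symm
      have hIH := IH (cs.length (cs.simple i * x)) (by omega) (cs.simple i * x) rfl
      have h2 : ∀ j : Fin 2, j = 0 ∨ j = 1 := by decide
      rcases h2 i with rfl | rfl
      · have hny : ¬ lab cs hM (cs.simple 0 * x) < 0 := by
          intro h
          have := hIH.2.1 h
          rw [← hxy] at this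
          omega
        have hlx : lab cs hM x = -1 - lab cs hM (cs.simple 0 * x) := by
          conv_lhs => rw [hxy, lab_a]
        refine ⟨by rw [hlx]; omega, fun _ => by omega, fun h => absurd h (by omega)⟩
      · have hny : ¬ 0 < lab cs hM (cs.simple 1 * x) := by
          intro h
          have := hIH.2.2 h
          rw [← hxy] at this
          omega
        have hlx : lab cs hM x = 1 - lab cs hM (cs.simple 1 * x) := by
          conv_lhs => rw [hxy, lab_b]
        refine ⟨by rw [hlx]; omega, fun h => absurd h (by omega), fun _ => by omega⟩

theorem length_eq_lab (x : W) : cs.length x = (lab cs hM x).natAbs := (main cs hM x).1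

theorem asc0 (x : W) (h : 0 ≤ lab cs hM x) :
    cs.length (cs.simple 0 * x) = cs.length x + 1 := by
  rw [length_eq_lab cs hM, length_eq_lab cs hM, lab_a]; omega

theorem desc0 (x : W) (h : lab cs hM x < 0) :
    cs.length (cs.simple 0 * x) + 1 = cs.length x := by
  rw [length_eq_lab cs hM, length_eq_lab cs hM, lab_a]; omega

theorem asc1 (x : W) (h : lab cs hM x ≤ 0) :
    cs.length (cs.simple 1 * x) = cs.length x + 1 := by
  rw [length_eq_lab cs hM, length_eq_lab cs hM, lab_b]; omega

theorem desc1 (x : W) (h : 0 < lab cs hM x) :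
    cs.length (cs.simple 1 * x) + 1 = cs.length x := by
  rw [length_eq_lab cs hM, length_eq_lab cs hM, lab_b]; omega

end Stmt7Aux

/-- In the infinite dihedral Coxeter group (off-diagonal Coxeter matrix entry `0`,
meaning infinite order), for `w = (s₁ s₂)^k` with `k ≥ 1`, the set `𝔈(w)` is empty:
`N_{w,z,z} = 0` for all `z`. -/
theorem stmt_7 {W H : Type*} [Group W] {M : CoxeterMatrix (Fin 2)} (hM : M 0 1 = 0)
    (cs : CoxeterSystem M W)
    [Ring H] [Algebra (Polynomial ℤ) H] (T : Module.Basis W (Polynomial ℤ) H)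
    (hone : T 1 = 1)
    (hmul : ∀ y y' : W, cs.length (y * y') = cs.length y + cs.length y' →
      T y * T y' = T (y * y'))
    (hquad : ∀ i : Fin 2, (T (cs.simple i) + 1) *
      (T (cs.simple i) - algebraMap (Polynomial ℤ) H X) = 0)
    (k : ℕ) (hk : 1 ≤ k) (w : W)
    (hw : w = (cs.simple 0 * cs.simple 1) ^ k) (z : W) :
    heckeN T w z z = 0 := by
  classical
  subst hw
  set a := cs.simple 0 with ha
  set b := cs.simple 1 with hb
  set n : W → ℤ := Stmt7Aux.lab cs hM with hn
  have hna : ∀ x, n (a * x) = -1 - n x := Stmt7Aux.lab_a cs hM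
  have hnb : ∀ x, n (b * x) = 1 - n x := Stmt7Aux.lab_b cs hM
  -- basic Hecke multiplication rules
  have tasc : ∀ (i : Fin 2) (x : W), cs.length (cs.simple i * x) = cs.length x + 1 →
      T (cs.simple i) * T x = T (cs.simple i * x) := by
    intro i x h
    exact hmul _ _ (by rw [h, cs.length_simple]; omega)
  have tdesc : ∀ (i : Fin 2) (x : W), cs.length (cs.simple i * x) + 1 = cs.length x →
      T (cs.simple i) * T x
        = (X : Polynomial ℤ) • T (cs.simple i * x) + ((X - 1 : Polynomial ℤ)) • T x := by
    intro i x h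
    have hx : T (cs.simple i) * T (cs.simple i * x) = T x := by
      have h2 := hmul (cs.simple i) (cs.simple i * x)
        (by rw [cs.simple_mul_simple_cancel_left, cs.length_simple]; omega)
      rwa [cs.simple_mul_simple_cancel_left] at h2
    have hq := hquad i
    set t := T (cs.simple i) with ht
    set Q := algebraMap (Polynomial ℤ) H X with hQ
    have hc : t * Q = Q * t := (Algebra.commutes X t).symm
    have hsq : t * t = t * Q - t + Q := by
      have h1 : t * t - (t * Q - t + Q) = (t + 1) * (t - Q) := by noncomm_ring
      rw [hq] at h1
      exact sub_eq_zero.mp h1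
    rw [Algebra.smul_def, Algebra.smul_def, map_sub, map_one, ← hQ, ← hx, ← mul_assoc, hsq, hc]
    noncomm_ring
  -- the submodule spanned by T u with label < m
  set S : ℤ → Submodule (Polynomial ℤ) H :=
    fun m => Submodule.span (Polynomial ℤ) (T '' {u | n u < m}) with hS
  have hmem : ∀ (u : W) (m : ℤ), n u < m → T u ∈ S m :=
    fun u m h => Submodule.subset_span ⟨u, h, rfl⟩
  have hmono : ∀ m m' : ℤ, m ≤ m' → S m ≤ S m' :=
    fun m m' h => Submodule.span_mono (Set.image_mono (fun u hu => lt_of_lt_of_le hu h))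
  have mulA : ∀ (x : W) (m : ℤ), -1 - n x < m → (n x < 0 → n x < m) → T a * T x ∈ S m := by
    intro x m h1 h2
    rcases lt_or_ge (n x) 0 with hx | hx
    · rw [tdesc 0 x (Stmt7Aux.desc0 cs hM x hx)]
      refine Submodule.add_mem _ (Submodule.smul_mem _ _ (hmem _ _ ?_))
        (Submodule.smul_mem _ _ (hmem _ _ (h2 hx)))
      rw [hna]; omega
    · rw [tasc 0 x (Stmt7Aux.asc0 cs hM x hx)]
      refine hmem _ _ ?_
      rw [hna]; omega
  have pair : ∀ x : W, T a * (T b * T x) ∈ S (n x) := by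
    intro x
    rcases le_or_gt (n x) 0 with hx | hx
    · rw [tasc 1 x (Stmt7Aux.asc1 cs hM x hx)]
      exact mulA (b * x) (n x) (by rw [hnb]; omega) (by rw [hnb]; omega)
    · rw [tdesc 1 x (Stmt7Aux.desc1 cs hM x hx), mul_add, mul_smul_comm, mul_smul_comm]
      refine Submodule.add_mem _ (Submodule.smul_mem _ _ ?_) (Submodule.smul_mem _ _ ?_)
      · exact mulA (b * x) (n x) (by rw [hnb]; omega) (by rw [hnb]; omega)
      · exact mulA x (n x) (by omega) (by omega)
  have stepS : ∀ (m : ℤ) (h : H), h ∈ S m → T a * (T b * h) ∈ S m := by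
    intro m h hh
    induction hh using Submodule.span_induction with
    | mem u hu =>
      obtain ⟨v, hv, rfl⟩ := hu
      exact hmono _ _ (le_of_lt hv) (pair v)
    | zero => rw [mul_zero, mul_zero]; exact Submodule.zero_mem _
    | add u v _ _ hu hv => rw [mul_add, mul_add]; exact Submodule.add_mem _ hu hv
    | smul c u _ hu =>
      rw [mul_smul_comm, mul_smul_comm]; exact Submodule.smul_mem _ _ hu
  have hlab_pow : ∀ j : ℕ, n ((a * b) ^ j) = -2 * j := by
    intro j
    induction j with
    | zero => rw [pow_zero]; simpa using Stmt7Aux.lab_one cs hM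
    | succ j ih => rw [pow_succ', mul_assoc, hna, hnb, ih]; push_cast; ring
  have hpow : ∀ j : ℕ, T ((a * b) ^ (j + 1)) = T a * (T b * T ((a * b) ^ j)) := by
    intro j
    have h1 : T b * T ((a * b) ^ j) = T (b * (a * b) ^ j) :=
      tasc 1 _ (Stmt7Aux.asc1 cs hM _ (by rw [← hn, hlab_pow]; omega))
    have h2 : T a * T (b * (a * b) ^ j) = T (a * (b * (a * b) ^ j)) :=
      tasc 0 _ (Stmt7Aux.asc0 cs hM _ (by rw [← hn, hnb, hlab_pow]; omega))
    rw [h1, h2, ← mul_assoc, ← pow_succ']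
  have key : ∀ k' : ℕ, T ((a * b) ^ (k' + 1)) * T z ∈ S (n z) := by
    intro k'
    induction k' with
    | zero => rw [hpow 0, pow_zero, hone, mul_one, mul_assoc]; exact pair z
    | succ k' ih =>
      rw [hpow (k' + 1), mul_assoc, mul_assoc]
      exact stepS _ _ ih
  obtain ⟨k', rfl⟩ : ∃ k', k = k' + 1 := ⟨k - 1, by omega⟩
  have hker : S (n z) ≤ LinearMap.ker
      ((Finsupp.lapply z).comp (T.repr : H →ₗ[Polynomial ℤ] (W →₀ Polynomial ℤ))) := by
    rw [hS, Submodule.span_le]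
    rintro _ ⟨u, hu, rfl⟩
    have hne : u ≠ z := by
      intro h; subst h; simp only [Set.mem_setOf_eq] at hu; omega
    simp [LinearMap.mem_ker, Module.Basis.repr_self, Finsupp.single_eq_of_ne' hne]
  have hz := hker (key k')
  simpa [heckeN, LinearMap.mem_ker] using hz
end

section
/- Let W be the infinite dihedral Coxeter group with generators s₁, s₂. Then 𝔈(s₁s₂s₁) = {s₁s₂, s₁s₂s₁, s₁s₂s₁s₂, s₁s₂s₁s₂s₁, …}, i.e. N_{s₁s₂s₁,z,z} ≠ 0 exactly when z is an element of length ≥ 2 whose reduced expression begins with s₁. -/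
open Polynomial

namespace Stmt8Aux

open CoxeterSystem



/-- The two generating involutions of the concrete infinite dihedral action on `ℤ`. -/
def dmap (i : Fin 2) : Equiv.Perm ℤ :=
  Function.Involutive.toPerm (fun x => if i = 0 then -1 - x else 1 - x)
    (by intro x; by_cases h : i = 0 <;> simp [h])

lemma dmap_apply (i : Fin 2) (x : ℤ) : dmap i x = if i = 0 then -1 - x else 1 - x := rfl

lemma fin2_eq (a b c : Fin 2) (h1 : a ≠ c) (h2 : b ≠ c) : a = b := by
  fin_cases a <;> fin_cases b <;> fin_cases c <;> simp_all

variable {W : Type*} [Group W] {M : CoxeterMatrix (Fin 2)}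

lemma dmap_liftable (hM : M 0 1 = 0) : M.IsLiftable dmap := by
  intro i i'
  rcases eq_or_ne i i' with rfl | h
  · rw [M.diagonal, pow_one]
    ext x
    simp [dmap_apply]
    by_cases h : i = 0 <;> simp [h]
  · have h10 : M 1 0 = 0 := (M.symmetric 1 0).trans hM
    have : M i i' = 0 := by
      fin_cases i <;> fin_cases i' <;> simp_all
    rw [this, pow_zero]

variable (hM : M 0 1 = 0) (cs : CoxeterSystem M W)

/-- The concrete representation. -/
noncomputable def dF : W →* Equiv.Perm ℤ := cs.lift ⟨dmap, dmap_liftable hM⟩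

lemma dF_simple_mul (i : Fin 2) (z : W) :
    dF hM cs (cs.simple i * z) 0 = if i = 0 then -1 - dF hM cs z 0 else 1 - dF hM cs z 0 := by
  rw [map_mul]
  have : dF hM cs (cs.simple i) = dmap i := cs.lift_apply_simple (dmap_liftable hM) i
  rw [this]
  rfl

lemma abs_dF_le (z : W) : |dF hM cs z 0| ≤ (cs.length z : ℤ) := by
  obtain ⟨ω, hlen, rfl⟩ := cs.exists_reduced_word z
  rw [hlen.eq]
  clear hlen
  induction ω with
  | nil => simp
  | cons i ω ih =>
    rw [cs.wordProd_cons, dF_simple_mul]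
    by_cases h : i = 0 <;> simp only [h, if_true, if_false] <;>
      · simp only [List.length_cons]
        push_cast
        have := abs_sub_abs_le_abs_sub (-1 - ((dF hM cs) (cs.wordProd ω)) 0) (- ((dF hM cs) (cs.wordProd ω)) 0)
        have h2 := abs_sub_abs_le_abs_sub (1 - ((dF hM cs) (cs.wordProd ω)) 0) (- ((dF hM cs) (cs.wordProd ω)) 0)
        simp only [abs_neg, sub_neg_eq_add] at this h2
        have h3 : -1 - ((dF hM cs) (cs.wordProd ω)) 0 + ((dF hM cs) (cs.wordProd ω)) 0 = -1 := by ring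
        have h4 : 1 - ((dF hM cs) (cs.wordProd ω)) 0 + ((dF hM cs) (cs.wordProd ω)) 0 = 1 := by ring
        rw [h3] at this
        rw [h4] at h2
        simp at this h2
        omega


lemma prepend_alt (i i' : Fin 2) (m : ℕ) :
    cs.wordProd (CoxeterSystem.alternatingWord i i' (m + 1)) =
      cs.simple (if Even m then i' else i) * cs.wordProd (CoxeterSystem.alternatingWord i i' m) := by
  rw [CoxeterSystem.alternatingWord_succ', cs.wordProd_cons]

lemma dF_alt01 (m : ℕ) :
    dF hM cs (cs.wordProd (CoxeterSystem.alternatingWord 0 1 m)) 0 =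
      if Even m then -(m : ℤ) else (m : ℤ) := by
  induction m with
  | zero => simp [CoxeterSystem.alternatingWord]
  | succ m ih =>
    rw [prepend_alt, dF_simple_mul, ih]
    by_cases h : Even m
    · have h1 : ¬ Even (m+1) := by simp [Nat.even_add_one, h]
      simp only [h, h1, if_true, if_false]
      norm_num
      push_cast
      ring
    · have h1 : Even (m+1) := by simp [Nat.even_add_one, h]
      simp only [h, h1, if_true, if_false]
      norm_num
      push_cast
      ring

lemma dF_alt10 (m : ℕ) :
    dF hM cs (cs.wordProd (CoxeterSystem.alternatingWord 1 0 m)) 0 =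
      if Even m then (m : ℤ) else -(m : ℤ) := by
  induction m with
  | zero => simp [CoxeterSystem.alternatingWord]
  | succ m ih =>
    rw [prepend_alt, dF_simple_mul, ih]
    by_cases h : Even m
    · have h1 : ¬ Even (m+1) := by simp [Nat.even_add_one, h]
      simp only [h, h1, if_true, if_false]
      norm_num
      push_cast
      ring
    · have h1 : Even (m+1) := by simp [Nat.even_add_one, h]
      simp only [h, h1, if_true, if_false]
      norm_num
      push_cast
      ring

include hM in
lemma length_alt {i i' : Fin 2} (h : i ≠ i') (m : ℕ) :
    cs.length (cs.wordProd (CoxeterSystem.alternatingWord i i' m)) = m := by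
  apply le_antisymm
  · calc cs.length (cs.wordProd (CoxeterSystem.alternatingWord i i' m)) ≤
        (CoxeterSystem.alternatingWord i i' m).length := cs.length_wordProd_le _
      _ = m := CoxeterSystem.length_alternatingWord i i' m
  · have habs : |dF hM cs (cs.wordProd (CoxeterSystem.alternatingWord i i' m)) 0| = (m : ℤ) := by
      have : (i = 0 ∧ i' = 1) ∨ (i = 1 ∧ i' = 0) := by
        fin_cases i <;> fin_cases i' <;> simp_all
      rcases this with ⟨rfl, rfl⟩ | ⟨rfl, rfl⟩
      · rw [dF_alt01 hM cs m]
        by_cases h : Even m <;> simp [h]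
      · rw [dF_alt10 hM cs m]
        by_cases h : Even m <;> simp [h]
    have := abs_dF_le hM cs (cs.wordProd (CoxeterSystem.alternatingWord i i' m))
    rw [habs] at this
    exact_mod_cast this


include hM in
/-- Every element of a rank-2 Coxeter group is the product of a reduced alternating word. -/
lemma exists_alt (z : W) :
    ∃ i i' : Fin 2, i ≠ i' ∧ z = cs.wordProd (CoxeterSystem.alternatingWord i i' (cs.length z)) := by
  obtain ⟨n, hn⟩ : ∃ n, cs.length z = n := ⟨_, rfl⟩
  induction n generalizing z with
  | zero =>
    refine ⟨0, 1, by decide, ?_⟩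
    rw [hn]
    have : z = 1 := cs.length_eq_zero_iff.mp hn
    simp [this, CoxeterSystem.alternatingWord]
  | succ n ih =>
    have hz1 : z ≠ 1 := by
      intro h
      rw [h, cs.length_one] at hn
      exact Nat.succ_ne_zero n hn.symm
    obtain ⟨j, hj⟩ := cs.exists_leftDescent_of_ne_one hz1
    have hj2 := cs.isLeftDescent_iff.mp hj
    have hlen' : cs.length (cs.simple j * z) = n := by omega
    obtain ⟨i, i', hii, hz'⟩ := ih (cs.simple j * z) hlen'
    rw [hlen'] at hz'
    have hzz : z = cs.simple j * cs.wordProd (CoxeterSystem.alternatingWord i i' n) := by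
      rw [← hz', cs.simple_mul_simple_cancel_left]
    by_cases hjk : j = (if Even n then i' else i)
    · refine ⟨i, i', hii, ?_⟩
      rw [hn, prepend_alt cs i i' n, ← hjk, hzz]
    · rcases Nat.eq_zero_or_pos n with rfl | hnpos
      · refine ⟨if j = 0 then 1 else 0, j, by fin_cases j <;> decide, ?_⟩
        rw [hn]
        have h1 : CoxeterSystem.alternatingWord (if j = 0 then (1 : Fin 2) else 0) j 1 = [j] := by
          by_cases h : j = 0 <;> simp [h, CoxeterSystem.alternatingWord]
        rw [h1, cs.wordProd_singleton, hzz]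
        have h2 : cs.wordProd (CoxeterSystem.alternatingWord i i' 0) = 1 := by
          simp [CoxeterSystem.alternatingWord]
        rw [h2, mul_one]
      · exfalso
        obtain ⟨m, rfl⟩ : ∃ m, n = m + 1 := ⟨n - 1, by omega⟩
        have hk'k : (if Even m then i' else i) ≠ (if Even (m+1) then i' else i) := by
          rcases Nat.even_or_odd m with h | h
          · have : ¬ Even (m+1) := by simp [Nat.even_add_one, h]
            simp [h, this, Ne.symm hii]
          · have h' : ¬ Even m := by simp [Nat.not_even_iff_odd.mpr h]
            have : Even (m+1) := by simp [Nat.even_add_one, h']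
            simp [h', this, hii]
        have hjk' : j = (if Even m then i' else i) := fin2_eq j _ _ hjk hk'k
        have hcontr : z = cs.wordProd (CoxeterSystem.alternatingWord i i' m) := by
          rw [hzz, prepend_alt cs i i' m, ← hjk', cs.simple_mul_simple_cancel_left]
        have : cs.length z = m := by
          rw [hcontr]
          exact length_alt hM cs hii m
        omega

include hM in
/-- In the infinite dihedral group, an element cannot have two distinct left descents. -/
lemma descent_other {z : W} {j j' : Fin 2} (hjj : j ≠ j')
    (hdes : cs.length (cs.simple j * z) < cs.length z) :
    cs.length (cs.simple j' * z) = cs.length z + 1 := by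
  have hz1 : z ≠ 1 := by
    intro h
    rw [h, cs.length_one] at hdes
    omega
  obtain ⟨i, i', hii, hz⟩ := exists_alt hM cs z
  obtain ⟨m, hm⟩ : ∃ m, cs.length z = m + 1 := by
    have : cs.length z ≠ 0 := fun h => hz1 (cs.length_eq_zero_iff.mp h)
    exact ⟨cs.length z - 1, by omega⟩
  rw [hm] at hz
  have hk'k : (if Even m then i' else i) ≠ (if Even (m+1) then i' else i) := by
    rcases Nat.even_or_odd m with h | h
    · have : ¬ Even (m+1) := by simp [Nat.even_add_one, h]
      simp [h, this, Ne.symm hii]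
    · have h' : ¬ Even m := by simp [Nat.not_even_iff_odd.mpr h]
      have : Even (m+1) := by simp [Nat.even_add_one, h']
      simp [h', this, hii]
  have hgrow : ∀ l : Fin 2, l = (if Even (m+1) then i' else i) →
      cs.length (cs.simple l * z) = cs.length z + 1 := by
    intro l hl
    have h1 : cs.simple l * z = cs.wordProd (CoxeterSystem.alternatingWord i i' (m+1+1)) := by
      rw [prepend_alt cs i i' (m+1), ← hl, hz]
    rw [h1, length_alt hM cs hii, hm]
  have hjfirst : j = (if Even m then i' else i) := by
    by_contra hne
    have hj2 : j = (if Even (m+1) then i' else i) := fin2_eq j _ _ hne hk'k.symm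
    have := hgrow j hj2
    omega
  have hj' : j' = (if Even (m+1) then i' else i) :=
    fin2_eq j' _ _ (fun h => hjj (hjfirst.trans h.symm)) hk'k.symm
  exact hgrow j' hj'


section Hecke

variable {H : Type*} [Ring H] [Algebra (Polynomial ℤ) H] (T : Module.Basis W (Polynomial ℤ) H)

lemma repr_basis (u v : W) [Decidable (u = v)] : T.repr (T u) v = if u = v then 1 else 0 := by
  rw [Module.Basis.repr_self, Finsupp.single_apply]

omit hM in
lemma Hmul_inc (hmul : ∀ y y' : W, cs.length (y * y') = cs.length y + cs.length y' →
      T y * T y' = T (y * y')) (i : Fin 2) (z : W)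
    (h : cs.length (cs.simple i * z) = cs.length z + 1) :
    T (cs.simple i) * T z = T (cs.simple i * z) := by
  apply hmul
  rw [h, cs.length_simple]
  omega

omit hM in
lemma Hmul_dec (hone : T 1 = 1)
    (hmul : ∀ y y' : W, cs.length (y * y') = cs.length y + cs.length y' →
      T y * T y' = T (y * y'))
    (hquad : ∀ i : Fin 2, (T (cs.simple i) + 1) *
      (T (cs.simple i) - algebraMap (Polynomial ℤ) H X) = 0)
    (i : Fin 2) (z : W)
    (h : cs.length (cs.simple i * z) < cs.length z) :
    T (cs.simple i) * T z = ((X : Polynomial ℤ) - 1) • T z + (X : Polynomial ℤ) • T (cs.simple i * z) := by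
  have hlt : cs.length (cs.simple i * z) + 1 = cs.length z := cs.isLeftDescent_iff.mp h
  have hz : T (cs.simple i) * T (cs.simple i * z) = T z := by
    have hl : cs.length (cs.simple i * (cs.simple i * z)) =
        cs.length (cs.simple i) + cs.length (cs.simple i * z) := by
      rw [cs.simple_mul_simple_cancel_left, cs.length_simple]
      omega
    have := hmul (cs.simple i) (cs.simple i * z) hl
    rwa [cs.simple_mul_simple_cancel_left] at this
  have hsq : T (cs.simple i) * T (cs.simple i) =
      ((X : Polynomial ℤ) - 1) • T (cs.simple i) + (X : Polynomial ℤ) • (1 : H) := by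
    have h0 := hquad i
    set a := T (cs.simple i) with ha
    set c := algebraMap (Polynomial ℤ) H X with hc
    have hexp : (a + 1) * (a - c) = a * a + a - a * c - c := by
      noncomm_ring
    have h1 : a * a + a - a * c - c = 0 := by rw [← hexp, h0]
    have hac : a * c = (X : Polynomial ℤ) • a := by
      rw [hc, ← Algebra.commutes, ← Algebra.smul_def]
    have hcX : c = (X : Polynomial ℤ) • (1 : H) := by rw [hc, Algebra.algebraMap_eq_smul_one]
    have : a * a = (X : Polynomial ℤ) • a - a + (X : Polynomial ℤ) • (1:H) := by
      rw [← hac, ← hcX]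
      linear_combination (norm := noncomm_ring) h1
    rw [this, sub_smul, one_smul]
  calc T (cs.simple i) * T z
      = T (cs.simple i) * (T (cs.simple i) * T (cs.simple i * z)) := by rw [hz]
    _ = (T (cs.simple i) * T (cs.simple i)) * T (cs.simple i * z) := by rw [mul_assoc]
    _ = (((X : Polynomial ℤ) - 1) • T (cs.simple i) + (X : Polynomial ℤ) • (1 : H)) * T (cs.simple i * z) := by rw [hsq]
    _ = ((X : Polynomial ℤ) - 1) • (T (cs.simple i) * T (cs.simple i * z)) +
          (X : Polynomial ℤ) • ((1 : H) * T (cs.simple i * z)) := by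
        rw [add_mul, smul_mul_assoc, smul_mul_assoc]
    _ = ((X : Polynomial ℤ) - 1) • T z + (X : Polynomial ℤ) • T (cs.simple i * z) := by rw [hz, one_mul]

end Hecke

end Stmt8Aux

variable {B W H : Type*} [Group W] {M : CoxeterMatrix B}

/-- In the infinite dihedral Coxeter group, `𝔈(s₁s₂s₁)` consists exactly of the
elements of length at least `2` whose reduced expression begins with `s₁`
(i.e. with `l(s₁ z) < l(z)`). -/
theorem stmt_8 {W H : Type*} [Group W] {M : CoxeterMatrix (Fin 2)} (hM : M 0 1 = 0)
    (cs : CoxeterSystem M W)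
    [Ring H] [Algebra (Polynomial ℤ) H] (T : Module.Basis W (Polynomial ℤ) H)
    (hone : T 1 = 1)
    (hmul : ∀ y y' : W, cs.length (y * y') = cs.length y + cs.length y' →
      T y * T y' = T (y * y'))
    (hquad : ∀ i : Fin 2, (T (cs.simple i) + 1) *
      (T (cs.simple i) - algebraMap (Polynomial ℤ) H X) = 0)
    (w : W) (hw : w = cs.simple 0 * cs.simple 1 * cs.simple 0) (z : W) :
    heckeN T w z z ≠ 0 ↔
      2 ≤ cs.length z ∧ cs.length (cs.simple 0 * z) < cs.length z := by
  classical
  subst hw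
  -- basic length facts
  have L10 : cs.length (cs.simple 1 * cs.simple 0) = 2 := by
    have h := Stmt8Aux.length_alt hM cs (show (1:Fin 2) ≠ 0 by decide) 2
    rw [show CoxeterSystem.alternatingWord (1:Fin 2) 0 2 = [1,0] from rfl,
      cs.wordProd_cons, cs.wordProd_singleton] at h
    exact h
  have L01 : cs.length (cs.simple 0 * cs.simple 1) = 2 := by
    have h := Stmt8Aux.length_alt hM cs (show (0:Fin 2) ≠ 1 by decide) 2
    rw [show CoxeterSystem.alternatingWord (0:Fin 2) 1 2 = [0,1] from rfl,
      cs.wordProd_cons, cs.wordProd_singleton] at h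
    exact h
  have L010 : cs.length (cs.simple 0 * (cs.simple 1 * cs.simple 0)) = 3 := by
    have h := Stmt8Aux.length_alt hM cs (show (1:Fin 2) ≠ 0 by decide) 3
    rw [show CoxeterSystem.alternatingWord (1:Fin 2) 0 3 = [0,1,0] from rfl,
      cs.wordProd_cons, cs.wordProd_cons, cs.wordProd_singleton] at h
    exact h
  have hT10 : T (cs.simple 1) * T (cs.simple 0) = T (cs.simple 1 * cs.simple 0) :=
    hmul _ _ (by rw [L10, cs.length_simple, cs.length_simple])
  have key : T (cs.simple 0 * cs.simple 1 * cs.simple 0) * T z =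
      T (cs.simple 0) * (T (cs.simple 1) * (T (cs.simple 0) * T z)) := by
    have hassoc : cs.simple 0 * cs.simple 1 * cs.simple 0 =
        cs.simple 0 * (cs.simple 1 * cs.simple 0) := mul_assoc _ _ _
    rw [hassoc, ← hmul (cs.simple 0) (cs.simple 1 * cs.simple 0)
      (by rw [L010, cs.length_simple, L10]), ← hT10, mul_assoc, mul_assoc]
  have hne010 : ∀ u : W, cs.simple 0 * (cs.simple 1 * (cs.simple 0 * u)) ≠ u := by
    intro u h
    have h2 : (cs.simple 0 * (cs.simple 1 * cs.simple 0)) * u = 1 * u := by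
      rw [one_mul, mul_assoc, mul_assoc]; exact h
    have h3 := mul_right_cancel h2
    have h4 := congrArg cs.length h3
    rw [L010, cs.length_one] at h4
    exact absurd h4 (by omega)
  show T.repr (T (cs.simple 0 * cs.simple 1 * cs.simple 0) * T z) z ≠ 0 ↔ _
  rcases cs.length_simple_mul z 0 with hinc | hdec
  · -- s₀ increases the length of z : both sides false
    have e1 := Stmt8Aux.Hmul_inc cs T hmul 0 z hinc
    have d1 : cs.length (cs.simple 0 * (cs.simple 0 * z)) < cs.length (cs.simple 0 * z) := by
      rw [cs.simple_mul_simple_cancel_left]; omega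
    have e2l := Stmt8Aux.descent_other hM cs (show (0:Fin 2) ≠ 1 by decide) d1
    have e2 := Stmt8Aux.Hmul_inc cs T hmul 1 (cs.simple 0 * z) e2l
    have d2 : cs.length (cs.simple 1 * (cs.simple 1 * (cs.simple 0 * z))) <
        cs.length (cs.simple 1 * (cs.simple 0 * z)) := by
      rw [cs.simple_mul_simple_cancel_left]; omega
    have e3l := Stmt8Aux.descent_other hM cs (show (1:Fin 2) ≠ 0 by decide) d2
    have e3 := Stmt8Aux.Hmul_inc cs T hmul 0 (cs.simple 1 * (cs.simple 0 * z)) e3l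
    have hval : T.repr (T (cs.simple 0 * cs.simple 1 * cs.simple 0) * T z) z = 0 := by
      rw [key, e1, e2, e3, Stmt8Aux.repr_basis]
      simp [hne010 z]
    rw [hval]
    simp only [ne_eq, not_true_eq_false, not_false_eq_true, true_iff, false_iff, not_and, not_lt]
    intro _
    omega
  · -- s₀ decreases the length of z
    by_cases h2 : 2 ≤ cs.length z
    · -- the interesting case: coefficient is X(X-1)
      have hdlt : cs.length (cs.simple 0 * z) < cs.length z := by omega
      have e1 := Stmt8Aux.Hmul_dec cs T hone hmul hquad 0 z hdlt
      have htz := Stmt8Aux.descent_other hM cs (show (0:Fin 2) ≠ 1 by decide) hdlt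
      have ha1 : cs.simple 0 * z ≠ 1 := by
        intro h
        have := congrArg cs.length h
        rw [cs.length_one] at this
        omega
      obtain ⟨j, hj⟩ := cs.exists_leftDescent_of_ne_one ha1
      have hj2 := cs.isLeftDescent_iff.mp hj
      have hj1 : j = 1 := by
        rcases (show j = 0 ∨ j = 1 by fin_cases j <;> simp) with rfl | rfl
        · rw [cs.simple_mul_simple_cancel_left] at hj2; omega
        · rfl
      subst hj1
      have e2a := Stmt8Aux.Hmul_dec cs T hone hmul hquad 1 (cs.simple 0 * z) (by omega)
      have e2b := Stmt8Aux.Hmul_inc cs T hmul 1 z htz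
      have d2 : cs.length (cs.simple 1 * (cs.simple 1 * z)) < cs.length (cs.simple 1 * z) := by
        rw [cs.simple_mul_simple_cancel_left]; omega
      have e3l := Stmt8Aux.descent_other hM cs (show (1:Fin 2) ≠ 0 by decide) d2
      have e3a := Stmt8Aux.Hmul_inc cs T hmul 0 (cs.simple 1 * z) e3l
      have e3b : T (cs.simple 0) * T (cs.simple 0 * z) = T z := by
        have h' := Stmt8Aux.Hmul_inc cs T hmul 0 (cs.simple 0 * z)
          (by rw [cs.simple_mul_simple_cancel_left]; omega)
        rwa [cs.simple_mul_simple_cancel_left] at h'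
      have hne1 : cs.simple 0 * (cs.simple 1 * z) ≠ z := by
        intro h
        have h2' : (cs.simple 0 * cs.simple 1) * z = 1 * z := by
          rw [one_mul, mul_assoc]; exact h
        have h3 := mul_right_cancel h2'
        have h4 := congrArg cs.length h3
        rw [L01, cs.length_one] at h4
        exact absurd h4 (by omega)
      have hne3 : cs.simple 1 * (cs.simple 0 * z) ≠ z := by
        intro h
        have := congrArg cs.length h
        omega
      have hb : T.repr (T (cs.simple 0) * T (cs.simple 1 * (cs.simple 0 * z))) z = 0 := by
        rcases cs.length_simple_mul (cs.simple 1 * (cs.simple 0 * z)) 0 with hbin | hbde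
        · rw [Stmt8Aux.Hmul_inc cs T hmul 0 _ hbin, Stmt8Aux.repr_basis]
          simp [hne010 z]
        · rw [Stmt8Aux.Hmul_dec cs T hone hmul hquad 0 _ (by omega)]
          simp [Stmt8Aux.repr_basis, hne010 z, hne3]
      have step : T (cs.simple 1) * (T (cs.simple 0) * T z) =
          ((X : Polynomial ℤ) - 1) • T (cs.simple 1 * z) +
          (X : Polynomial ℤ) • (((X : Polynomial ℤ) - 1) • T (cs.simple 0 * z) +
            (X : Polynomial ℤ) • T (cs.simple 1 * (cs.simple 0 * z))) := by
        rw [e1]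
        simp only [mul_add, mul_smul_comm]
        rw [e2b, e2a]
      have step2 : T (cs.simple 0) * (T (cs.simple 1) * (T (cs.simple 0) * T z)) =
          ((X : Polynomial ℤ) - 1) • T (cs.simple 0 * (cs.simple 1 * z)) +
          (X : Polynomial ℤ) • (((X : Polynomial ℤ) - 1) • T z +
            (X : Polynomial ℤ) • (T (cs.simple 0) * T (cs.simple 1 * (cs.simple 0 * z)))) := by
        rw [step]
        simp only [mul_add, mul_smul_comm]
        rw [e3a, e3b]
      have hval : T.repr (T (cs.simple 0 * cs.simple 1 * cs.simple 0) * T z) z =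
          X * (X - 1) := by
        rw [key, step2]
        simp only [map_add, map_smul, Finsupp.add_apply, Finsupp.smul_apply, smul_eq_mul,
          Stmt8Aux.repr_basis, hb]
        simp [hne1]
      rw [hval]
      have hX : (X : Polynomial ℤ) * (X - 1) ≠ 0 := by
        apply mul_ne_zero Polynomial.X_ne_zero
        intro h
        have := congrArg (Polynomial.eval 0) h
        simp at this
      simp [hX, h2, hdlt]
    · -- length z = 1, i.e. z = s₀ : both sides false
      have hz1 : cs.length z = 1 := by
        have : cs.length z ≠ 0 := by omega
        omega
      have h0 : cs.length (cs.simple 0 * z) = 0 := by omega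
      have hz0 : cs.simple 0 * z = 1 := cs.length_eq_zero_iff.mp h0
      have hzs : z = cs.simple 0 := by
        have h' := congrArg (fun x => cs.simple 0 * x) hz0
        simp only [mul_one] at h'
        rwa [cs.simple_mul_simple_cancel_left] at h'
      subst hzs
      have e1 := Stmt8Aux.Hmul_dec cs T hone hmul hquad 0 (cs.simple 0)
        (by rw [cs.simple_mul_simple_self, cs.length_one, cs.length_simple]; omega)
      rw [cs.simple_mul_simple_self] at e1
      have e3a := Stmt8Aux.Hmul_inc cs T hmul 0 (cs.simple 1 * cs.simple 0)
        (by rw [L010, L10])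
      have e3b := Stmt8Aux.Hmul_inc cs T hmul 0 (cs.simple 1)
        (by rw [L01, cs.length_simple])
      have step : T (cs.simple 1) * (T (cs.simple 0) * T (cs.simple 0)) =
          ((X : Polynomial ℤ) - 1) • T (cs.simple 1 * cs.simple 0) +
          (X : Polynomial ℤ) • T (cs.simple 1) := by
        rw [e1]
        simp only [mul_add, mul_smul_comm]
        rw [hT10, hone, mul_one]
      have hne1 : cs.simple 0 * (cs.simple 1 * cs.simple 0) ≠ cs.simple 0 := by
        intro h
        have h4 := congrArg cs.length h
        rw [L010, cs.length_simple] at h4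
        exact absurd h4 (by omega)
      have hne2 : cs.simple 0 * cs.simple 1 ≠ cs.simple 0 := by
        intro h
        have h4 := congrArg cs.length h
        rw [L01, cs.length_simple] at h4
        exact absurd h4 (by omega)
      have hval : T.repr (T (cs.simple 0 * cs.simple 1 * cs.simple 0) * T (cs.simple 0))
          (cs.simple 0) = 0 := by
        rw [key, step]
        simp only [mul_add, mul_smul_comm]
        rw [e3a, e3b]
        simp [Stmt8Aux.repr_basis, hne1, hne2]
      rw [hval]
      simp [cs.length_simple]
end

section
/- Let W be the infinite dihedral Coxeter group with generators s₁, s₂ and w = s₁s₂s₁. Then d(w) := max over z ∈ 𝔈(w) of deg N_{w,z,z} equals 2, which is strictly less than l(w) = 3. -/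
open Polynomial

variable {B W H : Type*} [Group W] {M : CoxeterMatrix B}

section ReprLemmas

variable {W H : Type*} [Ring H] [Algebra (Polynomial ℤ) H] (T : Module.Basis W (Polynomial ℤ) H)

lemma reprT_self (v : W) : T.repr (T v) v = 1 := by
  rw [Module.Basis.repr_self]
  exact Finsupp.single_eq_same

lemma reprT_ne {v z : W} (h : v ≠ z) : T.repr (T v) z = 0 := by
  rw [Module.Basis.repr_self]
  exact Finsupp.single_eq_of_ne' h

end ReprLemmas

namespace InfDihedralAux

open CoxeterSystem

/-- Negation of `ℤ`, as a permutation. -/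
def r0 : Equiv.Perm ℤ := Equiv.neg ℤ

/-- The map `x ↦ 1 - x`, as a permutation of `ℤ`. -/
def r1 : Equiv.Perm ℤ := (Equiv.neg ℤ).trans (Equiv.addLeft 1)

lemma r0_apply (x : ℤ) : r0 x = -x := rfl
lemma r1_apply (x : ℤ) : r1 x = 1 + -x := rfl

section

variable {W : Type*} [Group W] {M : CoxeterMatrix (Fin 2)}

lemma liftable (hM : M 0 1 = 0) : M.IsLiftable ![r0, r1] := by
  have h10 : M 1 0 = 0 := (M.symmetric 1 0).trans hM
  intro i j
  fin_cases i <;> fin_cases j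
  · rw [show ((⟨0, by omega⟩ : Fin 2) : Fin 2) = 0 from rfl, M.diagonal]
    ext x; simp [r0_apply, Equiv.Perm.mul_apply]
  · rw [show ((⟨0, by omega⟩ : Fin 2) : Fin 2) = 0 from rfl,
      show ((⟨1, by omega⟩ : Fin 2) : Fin 2) = 1 from rfl, hM, pow_zero]
  · rw [show ((⟨0, by omega⟩ : Fin 2) : Fin 2) = 0 from rfl,
      show ((⟨1, by omega⟩ : Fin 2) : Fin 2) = 1 from rfl, h10, pow_zero]
  · rw [show ((⟨1, by omega⟩ : Fin 2) : Fin 2) = 1 from rfl, M.diagonal]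
    ext x; simp [r1_apply, Equiv.Perm.mul_apply]

/-- The canonical "rotation" element `s₀ s₁` of the dihedral group. -/
def pel (cs : CoxeterSystem M W) : W := cs.simple 0 * cs.simple 1

/-- The geometric representation of the infinite dihedral group on `ℤ`. -/
noncomputable def phi (hM : M 0 1 = 0) (cs : CoxeterSystem M W) : W →* Equiv.Perm ℤ :=
  cs.lift ⟨![r0, r1], liftable hM⟩

variable {cs : CoxeterSystem M W}

variable (hM : M 0 1 = 0) (cs : CoxeterSystem M W)

lemma phi_s0 : phi hM cs (cs.simple 0) = r0 := by simp [phi]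

lemma phi_s1 : phi hM cs (cs.simple 1) = r1 := by simp [phi]

/-- The translation part of the action of an element of the infinite dihedral group on `ℤ`. -/
noncomputable def cc (z : W) : ℤ := phi hM cs z 0

lemma cc_one : cc hM cs 1 = 0 := by simp [cc]

lemma cc_s0_mul (z : W) : cc hM cs (cs.simple 0 * z) = -(cc hM cs z) := by
  simp only [cc, map_mul, Equiv.Perm.mul_apply, phi_s0, r0_apply]

lemma cc_s1_mul (z : W) : cc hM cs (cs.simple 1 * z) = 1 - cc hM cs z := by
  simp only [cc, map_mul, Equiv.Perm.mul_apply, phi_s1, r1_apply]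
  ring

lemma phi_p_apply (k : ℤ) (x : ℤ) : phi hM cs ((pel cs) ^ k) x = x - k := by
  have hp : ∀ y : ℤ, phi hM cs (pel cs) y = y - 1 := by
    intro y
    simp only [pel, map_mul, Equiv.Perm.mul_apply, phi_s0, phi_s1, r0_apply, r1_apply]
    ring
  have hpinv : ∀ y : ℤ, phi hM cs ((pel cs)⁻¹) y = y + 1 := by
    intro y
    rw [map_inv]
    have : phi hM cs (pel cs) (y + 1) = y := by rw [hp]; ring
    calc (phi hM cs (pel cs))⁻¹ y = (phi hM cs (pel cs))⁻¹ (phi hM cs (pel cs) (y + 1)) := by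
          rw [this]
      _ = y + 1 := by simp
  induction k using Int.induction_on generalizing x with
  | zero => simp
  | succ n ih =>
      rw [zpow_add_one, map_mul, Equiv.Perm.mul_apply, hp, ih]
      ring
  | pred n ih =>
      rw [zpow_sub_one, map_mul, Equiv.Perm.mul_apply, hpinv, ih]
      ring

lemma cc_p_mul (k : ℤ) (z : W) : cc hM cs ((pel cs) ^ k * z) = cc hM cs z - k := by
  simp only [cc, map_mul, Equiv.Perm.mul_apply, phi_p_apply]

lemma cc_p_pow (k : ℤ) : cc hM cs ((pel cs) ^ k) = -k := by
  have := cc_p_mul hM cs k 1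
  rwa [mul_one, cc_one, zero_sub] at this

lemma cc_ps (k : ℤ) : cc hM cs ((pel cs) ^ k * cs.simple 0) = -k := by
  rw [cc_p_mul]
  have : cc hM cs (cs.simple 0) = 0 := by
    simp [cc, phi_s0, r0_apply]
  rw [this]; ring

/-! ### Group identities -/

lemma sp_conj : cs.simple 0 * pel cs * (cs.simple 0)⁻¹ = (pel cs)⁻¹ := by
  rw [cs.inv_simple]
  show cs.simple 0 * (cs.simple 0 * cs.simple 1) * cs.simple 0 = (pel cs)⁻¹
  rw [cs.simple_mul_simple_cancel_left, pel, mul_inv_rev, cs.inv_simple, cs.inv_simple]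

lemma sp_zpow (k : ℤ) : cs.simple 0 * (pel cs) ^ k = (pel cs) ^ (-k) * cs.simple 0 := by
  have h : cs.simple 0 * (pel cs) ^ k * (cs.simple 0)⁻¹ = (pel cs) ^ (-k) := by
    rw [← conj_zpow, sp_conj, inv_zpow, ← zpow_neg]
  calc cs.simple 0 * (pel cs) ^ k
      = cs.simple 0 * (pel cs) ^ k * (cs.simple 0)⁻¹ * cs.simple 0 := by group
    _ = (pel cs) ^ (-k) * cs.simple 0 := by rw [h]

lemma s1_eq : cs.simple 1 = cs.simple 0 * pel cs := by
  rw [pel, cs.simple_mul_simple_cancel_left]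

lemma tp_zpow (k : ℤ) :
    cs.simple 1 * (pel cs) ^ k = (pel cs) ^ (-k - 1) * cs.simple 0 := by
  rw [s1_eq, mul_assoc, ← zpow_one_add, sp_zpow]
  ring_nf

lemma sps_zpow (k : ℤ) :
    cs.simple 0 * ((pel cs) ^ k * cs.simple 0) = (pel cs) ^ (-k) := by
  rw [← mul_assoc, sp_zpow, mul_assoc, cs.simple_mul_simple_self, mul_one]

lemma tps_zpow (k : ℤ) :
    cs.simple 1 * ((pel cs) ^ k * cs.simple 0) = (pel cs) ^ (-k - 1) := by
  rw [← mul_assoc, tp_zpow, mul_assoc, cs.simple_mul_simple_self, mul_one]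

/-! ### Length upper bounds -/

lemma len_p_le_nat (n : ℕ) : cs.length ((pel cs) ^ (n : ℤ)) ≤ 2 * n := by
  induction n with
  | zero => simp
  | succ m ih =>
      have h1 : ((pel cs) ^ ((m : ℤ) + 1)) = (pel cs) ^ (m : ℤ) * pel cs := by
        rw [zpow_add_one]
      have h2 : cs.length (pel cs) ≤ 2 := by
        have := cs.length_mul_le (cs.simple 0) (cs.simple 1)
        rwa [cs.length_simple, cs.length_simple, ← pel] at this
      calc cs.length ((pel cs) ^ (((m : ℕ) + 1 : ℕ) : ℤ))
          = cs.length ((pel cs) ^ ((m : ℤ) + 1)) := by norm_cast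
        _ ≤ cs.length ((pel cs) ^ (m : ℤ)) + cs.length (pel cs) := by
            rw [h1]; exact cs.length_mul_le _ _
        _ ≤ 2 * m + 2 := by omega
        _ = 2 * (m + 1) := by ring

lemma len_p_le (k : ℤ) : cs.length ((pel cs) ^ k) ≤ 2 * k.natAbs := by
  rcases le_or_gt 0 k with h | h
  · have : k = (k.natAbs : ℤ) := by omega
    rw [this]
    exact len_p_le_nat cs k.natAbs
  · have h1 : (pel cs) ^ k = ((pel cs) ^ ((k.natAbs : ℤ)))⁻¹ := by
      rw [← zpow_neg]
      congr 1
      omega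
    rw [h1, cs.length_inv]
    exact len_p_le_nat cs k.natAbs

lemma len_ps_le (k : ℤ) : cs.length ((pel cs) ^ k * cs.simple 0) ≤ 2 * k.natAbs + 1 := by
  have := cs.length_mul_le ((pel cs) ^ k) (cs.simple 0)
  rw [cs.length_simple] at this
  have := len_p_le cs k
  omega

lemma len_pt_le (k : ℤ) : cs.length ((pel cs) ^ k * cs.simple 1) ≤ 2 * k.natAbs + 1 := by
  have := cs.length_mul_le ((pel cs) ^ k) (cs.simple 1)
  rw [cs.length_simple] at this
  have := len_p_le cs k
  omega

lemma ps_eq_pt (k : ℤ) : (pel cs) ^ k * cs.simple 0 = (pel cs) ^ (k + 1) * cs.simple 1 := by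
  rw [zpow_add_one, mul_assoc]
  congr 1
  rw [pel, mul_assoc, cs.simple_mul_simple_self, mul_one]

lemma len_ps_le' (k : ℤ) (hk : k ≤ -1) :
    cs.length ((pel cs) ^ k * cs.simple 0) ≤ 2 * k.natAbs - 1 := by
  rw [ps_eq_pt]
  have := len_pt_le cs (k + 1)
  omega

/-! ### The master classification theorem -/

theorem master (z : W) :
    (Even (cs.length z) →
      z = (pel cs) ^ (-(cc hM cs z)) ∧ cs.length z = 2 * (cc hM cs z).natAbs) ∧
    (Odd (cs.length z) →
      z = (pel cs) ^ (-(cc hM cs z)) * cs.simple 0 ∧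
        cs.length z = (2 * cc hM cs z - 1).natAbs) := by
  have key : ∀ n : ℕ, ∀ z : W, cs.length z = n →
      (Even n →
        z = (pel cs) ^ (-(cc hM cs z)) ∧ n = 2 * (cc hM cs z).natAbs) ∧
      (Odd n →
        z = (pel cs) ^ (-(cc hM cs z)) * cs.simple 0 ∧
          n = (2 * cc hM cs z - 1).natAbs) := by
    intro n
    induction n using Nat.strong_induction_on with
    | _ n ih =>
      intro z hz
      rcases eq_or_ne z 1 with rfl | hz1
      · rw [cs.length_one] at hz
        subst hz
        constructor
        · intro _
          rw [cc_one]
          simp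
        · intro h
          exact absurd h (by simp)
      · obtain ⟨i, hi⟩ := cs.exists_leftDescent_of_ne_one hz1
        have hlen : cs.length (cs.simple i * z) + 1 = cs.length z :=
          (cs.isLeftDescent_iff).mp hi
        set z' := cs.simple i * z with hz'def
        have hzz' : z = cs.simple i * z' := by
          rw [hz'def, cs.simple_mul_simple_cancel_left]
        have hlt : cs.length z' < n := by omega
        have IH := ih (cs.length z') hlt z' rfl
        have hi01 : i = 0 ∨ i = 1 := by
          fin_cases i
          · exact Or.inl rfl
          · exact Or.inr rfl
        constructor
        · -- Even case for z;  z' has odd length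
          intro hpar
          have hodd : Odd (cs.length z') := by
            rw [Nat.even_iff] at hpar
            rw [Nat.odd_iff]
            omega
          obtain ⟨hz'eq, hz'len⟩ := IH.2 hodd
          set c' := cc hM cs z' with hc'def
          rcases hi01 with rfl | rfl
          · -- z = s₀ z' = p^{c'}
            have hzeq : z = (pel cs) ^ c' := by
              rw [hzz', hz'eq, sps_zpow, neg_neg]
            have hcz : cc hM cs z = -c' := by
              rw [hzz']
              exact cc_s0_mul hM cs z'
            -- rule out c' ≤ 0
            rcases le_or_gt c' 0 with hc | hc
            · exfalso
              have hub := len_p_le cs c'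
              rw [← hzeq] at hub
              omega
            · constructor
              · rw [hcz, neg_neg, hzeq]
              · rw [hcz]
                omega
          · -- z = s₁ z' = p^{c'-1}
            have hzeq : z = (pel cs) ^ (c' - 1) := by
              rw [hzz', hz'eq, tps_zpow, neg_neg]
            have hcz : cc hM cs z = 1 - c' := by
              rw [hzz']
              exact cc_s1_mul hM cs z'
            rcases le_or_gt 1 c' with hc | hc
            · exfalso
              have hub := len_p_le cs (c' - 1)
              rw [← hzeq] at hub
              omega
            · constructor
              · rw [hcz, hzeq]
                congr 1
                ring
              · rw [hcz]
                omega
        · -- Odd case for z; z' has even length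
          intro hpar
          have heven : Even (cs.length z') := by
            rw [Nat.odd_iff] at hpar
            rw [Nat.even_iff]
            omega
          obtain ⟨hz'eq, hz'len⟩ := IH.1 heven
          set c' := cc hM cs z' with hc'def
          rcases hi01 with rfl | rfl
          · -- z = s₀ p^{-c'} = p^{c'} s₀
            have hzeq : z = (pel cs) ^ c' * cs.simple 0 := by
              rw [hzz', hz'eq, sp_zpow, neg_neg]
            have hcz : cc hM cs z = -c' := by
              rw [hzz']
              exact cc_s0_mul hM cs z'
            rcases le_or_gt c' (-1) with hc | hc
            · exfalso
              have hub := len_ps_le' cs c' hc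
              rw [← hzeq] at hub
              omega
            · constructor
              · rw [hcz, neg_neg, hzeq]
              · rw [hcz]
                omega
          · -- z = s₁ p^{-c'} = p^{c'-1} s₀
            have hzeq : z = (pel cs) ^ (c' - 1) * cs.simple 0 := by
              rw [hzz', hz'eq, tp_zpow, neg_neg]
            have hcz : cc hM cs z = 1 - c' := by
              rw [hzz']
              exact cc_s1_mul hM cs z'
            rcases le_or_gt 1 c' with hc | hc
            · exfalso
              have hub := len_ps_le cs (c' - 1)
              rw [← hzeq] at hub
              omega
            · constructor
              · rw [hcz, hzeq]
                congr 2
                ring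
              · rw [hcz]
                omega
  have h := key (cs.length z) z rfl
  exact h

/-! ### Exact lengths and disequalities for normal forms -/

include hM

lemma len_p (k : ℤ) : cs.length ((pel cs) ^ k) = 2 * k.natAbs := by
  rcases Nat.even_or_odd (cs.length ((pel cs) ^ k)) with h | h
  · obtain ⟨_, hlen⟩ := (master hM cs ((pel cs) ^ k)).1 h
    rw [cc_p_pow] at hlen
    rwa [Int.natAbs_neg] at hlen
  · obtain ⟨heq, _⟩ := (master hM cs ((pel cs) ^ k)).2 h
    rw [cc_p_pow, neg_neg] at heq
    exfalso
    have h0 : (pel cs) ^ k * 1 = (pel cs) ^ k * cs.simple 0 := by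
      rw [mul_one]; exact heq
    have h2 : (1 : W) = cs.simple 0 := mul_left_cancel h0
    have h1 := cs.length_simple 0
    rw [← h2, cs.length_one] at h1
    exact absurd h1 (by omega)

lemma len_ps (k : ℤ) : cs.length ((pel cs) ^ k * cs.simple 0) = (2 * k + 1).natAbs := by
  rcases Nat.even_or_odd (cs.length ((pel cs) ^ k * cs.simple 0)) with h | h
  · obtain ⟨heq, _⟩ := (master hM cs ((pel cs) ^ k * cs.simple 0)).1 h
    rw [cc_ps, neg_neg] at heq
    exfalso
    have h0 : (pel cs) ^ k * cs.simple 0 = (pel cs) ^ k * 1 := by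
      rw [mul_one]; exact heq
    have h2 : cs.simple 0 = (1 : W) := mul_left_cancel h0
    have h1 := cs.length_simple 0
    rw [h2, cs.length_one] at h1
    exact absurd h1 (by omega)
  · obtain ⟨_, hlen⟩ := (master hM cs ((pel cs) ^ k * cs.simple 0)).2 h
    rw [cc_ps] at hlen
    rw [hlen]
    omega

lemma p_pow_inj {a b : ℤ} (h : (pel cs) ^ a = (pel cs) ^ b) : a = b := by
  have := congrArg (cc hM cs) h
  rw [cc_p_pow, cc_p_pow] at this
  omega

lemma p_ne_ps (a b : ℤ) : (pel cs) ^ a ≠ (pel cs) ^ b * cs.simple 0 := by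
  intro h
  have := congrArg cs.length h
  rw [len_p hM cs, len_ps hM cs] at this
  omega

lemma ps_inj {a b : ℤ} (h : (pel cs) ^ a * cs.simple 0 = (pel cs) ^ b * cs.simple 0) : a = b :=
  p_pow_inj hM cs (mul_right_cancel h)

/-! ### Hecke algebra multiplication rules -/

section Hecke

variable {H : Type*} [Ring H] [Algebra (Polynomial ℤ) H] (T : Module.Basis W (Polynomial ℤ) H)

omit hM

lemma Tsq (hone : T 1 = 1)
    (hquad : ∀ i : Fin 2, (T (cs.simple i) + 1) *
      (T (cs.simple i) - algebraMap (Polynomial ℤ) H X) = 0) (i : Fin 2) :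
    T (cs.simple i) * T (cs.simple i) = ((X : Polynomial ℤ) - 1) • T (cs.simple i) + (X : Polynomial ℤ) • T 1 := by
  have h := hquad i
  rw [mul_sub, sub_eq_zero, add_mul, add_mul, one_mul, one_mul] at h
  have hq : T (cs.simple i) * algebraMap (Polynomial ℤ) H X = (X : Polynomial ℤ) • T (cs.simple i) := by
    rw [← Algebra.commutes, ← Algebra.smul_def]
  have hq1 : algebraMap (Polynomial ℤ) H X = (X : Polynomial ℤ) • T 1 := by
    rw [hone, Algebra.smul_def, mul_one]
  rw [hq, hq1] at h
  have h2 := eq_sub_of_add_eq h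
  rw [h2, sub_smul, one_smul]
  abel

lemma ruleA (hmul : ∀ y y' : W, cs.length (y * y') = cs.length y + cs.length y' →
      T y * T y' = T (y * y')) (i : Fin 2) (z : W)
    (h : cs.length (cs.simple i * z) = cs.length z + 1) :
    T (cs.simple i) * T z = T (cs.simple i * z) := by
  apply hmul
  rw [h, cs.length_simple]
  omega

lemma ruleB (hone : T 1 = 1)
    (hmul : ∀ y y' : W, cs.length (y * y') = cs.length y + cs.length y' →
      T y * T y' = T (y * y'))
    (hquad : ∀ i : Fin 2, (T (cs.simple i) + 1) *
      (T (cs.simple i) - algebraMap (Polynomial ℤ) H X) = 0) (i : Fin 2) (z : W)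
    (h : cs.length (cs.simple i * z) + 1 = cs.length z) :
    T (cs.simple i) * T z = (X : Polynomial ℤ) • T (cs.simple i * z) + ((X : Polynomial ℤ) - 1) • T z := by
  have hz : T (cs.simple i) * T (cs.simple i * z) = T z := by
    have hlen : cs.length (cs.simple i * (cs.simple i * z)) =
        cs.length (cs.simple i) + cs.length (cs.simple i * z) := by
      rw [cs.simple_mul_simple_cancel_left, cs.length_simple]
      omega
    have h2 := hmul (cs.simple i) (cs.simple i * z) hlen
    rwa [cs.simple_mul_simple_cancel_left] at h2
  calc T (cs.simple i) * T z
      = T (cs.simple i) * (T (cs.simple i) * T (cs.simple i * z)) := by rw [hz]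
    _ = (T (cs.simple i) * T (cs.simple i)) * T (cs.simple i * z) := by rw [mul_assoc]
    _ = (((X : Polynomial ℤ) - 1) • T (cs.simple i) + (X : Polynomial ℤ) • T 1) * T (cs.simple i * z) := by
        rw [Tsq cs T hone hquad i]
    _ = ((X : Polynomial ℤ) - 1) • (T (cs.simple i) * T (cs.simple i * z)) + X • (T 1 * T (cs.simple i * z)) := by
        rw [add_mul, smul_mul_assoc, smul_mul_assoc]
    _ = (X : Polynomial ℤ) • T (cs.simple i * z) + ((X : Polynomial ℤ) - 1) • T z := by
        rw [hz, hone, one_mul]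
        abel

include hM

variable (hone : T 1 = 1)
  (hmul : ∀ y y' : W, cs.length (y * y') = cs.length y + cs.length y' →
      T y * T y' = T (y * y'))
  (hquad : ∀ i : Fin 2, (T (cs.simple i) + 1) *
      (T (cs.simple i) - algebraMap (Polynomial ℤ) H X) = 0)

include hone hmul hquad

set_option linter.unusedSectionVars false

lemma ruleS1 (k : ℤ) (hk : k ≤ 0) :
    T (cs.simple 0) * T ((pel cs) ^ k) = T ((pel cs) ^ (-k) * cs.simple 0) := by
  have h := ruleA cs T hmul 0 ((pel cs) ^ k) ?_
  · rwa [sp_zpow] at h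
  · rw [sp_zpow, len_ps hM cs, len_p hM cs]
    omega

lemma ruleS2 (k : ℤ) (hk : 1 ≤ k) :
    T (cs.simple 0) * T ((pel cs) ^ k) =
      (X : Polynomial ℤ) • T ((pel cs) ^ (-k) * cs.simple 0) + ((X : Polynomial ℤ) - 1) • T ((pel cs) ^ k) := by
  have h := ruleB cs T hone hmul hquad 0 ((pel cs) ^ k) ?_
  · rwa [sp_zpow] at h
  · rw [sp_zpow, len_ps hM cs, len_p hM cs]
    omega

lemma ruleS3 (k : ℤ) (hk : k ≤ -1) :
    T (cs.simple 0) * T ((pel cs) ^ k * cs.simple 0) = T ((pel cs) ^ (-k)) := by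
  have h := ruleA cs T hmul 0 ((pel cs) ^ k * cs.simple 0) ?_
  · rwa [sps_zpow] at h
  · rw [sps_zpow, len_ps hM cs, len_p hM cs]
    omega

lemma ruleS4 (k : ℤ) (hk : 0 ≤ k) :
    T (cs.simple 0) * T ((pel cs) ^ k * cs.simple 0) =
      (X : Polynomial ℤ) • T ((pel cs) ^ (-k)) + ((X : Polynomial ℤ) - 1) • T ((pel cs) ^ k * cs.simple 0) := by
  have h := ruleB cs T hone hmul hquad 0 ((pel cs) ^ k * cs.simple 0) ?_
  · rwa [sps_zpow] at h
  · rw [sps_zpow, len_ps hM cs, len_p hM cs]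
    omega

lemma ruleT1 (k : ℤ) (hk : 0 ≤ k) :
    T (cs.simple 1) * T ((pel cs) ^ k) = T ((pel cs) ^ (-k - 1) * cs.simple 0) := by
  have h := ruleA cs T hmul 1 ((pel cs) ^ k) ?_
  · rwa [tp_zpow] at h
  · rw [tp_zpow, len_ps hM cs, len_p hM cs]
    omega

lemma ruleT2 (k : ℤ) (hk : k ≤ -1) :
    T (cs.simple 1) * T ((pel cs) ^ k) =
      (X : Polynomial ℤ) • T ((pel cs) ^ (-k - 1) * cs.simple 0) + ((X : Polynomial ℤ) - 1) • T ((pel cs) ^ k) := by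
  have h := ruleB cs T hone hmul hquad 1 ((pel cs) ^ k) ?_
  · rwa [tp_zpow] at h
  · rw [tp_zpow, len_ps hM cs, len_p hM cs]
    omega

lemma ruleT3 (k : ℤ) (hk : 0 ≤ k) :
    T (cs.simple 1) * T ((pel cs) ^ k * cs.simple 0) = T ((pel cs) ^ (-k - 1)) := by
  have h := ruleA cs T hmul 1 ((pel cs) ^ k * cs.simple 0) ?_
  · rwa [tps_zpow] at h
  · rw [tps_zpow, len_ps hM cs, len_p hM cs]
    omega

lemma ruleT4 (k : ℤ) (hk : k ≤ -1) :
    T (cs.simple 1) * T ((pel cs) ^ k * cs.simple 0) =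
      (X : Polynomial ℤ) • T ((pel cs) ^ (-k - 1)) + ((X : Polynomial ℤ) - 1) • T ((pel cs) ^ k * cs.simple 0) := by
  have h := ruleB cs T hone hmul hquad 1 ((pel cs) ^ k * cs.simple 0) ?_
  · rwa [tps_zpow] at h
  · rw [tps_zpow, len_ps hM cs, len_p hM cs]
    omega

/-! ### Case computations -/

lemma calc_even_nonpos (k : ℤ) (hk : k ≤ 0) :
    T.repr (T (cs.simple 0) * (T (cs.simple 1) * (T (cs.simple 0) * T ((pel cs) ^ k))))
      ((pel cs) ^ k) = 0 := by
  rw [ruleS1 hM cs T hone hmul hquad k hk]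
  rw [ruleT3 hM cs T hone hmul hquad (-k) (by omega)]
  simp only [neg_neg]
  rw [ruleS1 hM cs T hone hmul hquad (k - 1) (by omega)]
  exact reprT_ne T (Ne.symm (p_ne_ps hM cs k (-(k - 1))))

lemma calc_even_pos (k : ℤ) (hk : 1 ≤ k) :
    T.repr (T (cs.simple 0) * (T (cs.simple 1) * (T (cs.simple 0) * T ((pel cs) ^ k))))
      ((pel cs) ^ k) = X ^ 2 - X := by
  have h1 : (pel cs) ^ (-(k - 1)) * cs.simple 0 ≠ (pel cs) ^ k :=
    Ne.symm (p_ne_ps hM cs k (-(k - 1)))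
  have h3 : (pel cs) ^ (-(-k - 1)) ≠ (pel cs) ^ k := by
    intro h
    have := p_pow_inj hM cs h
    omega
  rw [ruleS2 hM cs T hone hmul hquad k hk]
  simp only [mul_add, mul_smul_comm]
  rw [ruleT4 hM cs T hone hmul hquad (-k) (by omega)]
  rw [ruleT1 hM cs T hone hmul hquad k (by omega)]
  simp only [neg_neg, mul_add, mul_smul_comm]
  rcases le_or_gt k 1 with hk1 | hk1
  · -- k = 1
    rw [ruleS1 hM cs T hone hmul hquad (k - 1) (by omega)]
    rw [ruleS3 hM cs T hone hmul hquad (-k) (by omega)]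
    rw [ruleS3 hM cs T hone hmul hquad (-k - 1) (by omega)]
    simp only [neg_neg]
    simp only [map_add, map_smul, Finsupp.add_apply, Finsupp.smul_apply, smul_eq_mul,
      reprT_self T, reprT_ne T h1, reprT_ne T h3]
    ring
  · -- k ≥ 2
    have h2 : (pel cs) ^ (k - 1) ≠ (pel cs) ^ k := by
      intro h
      have := p_pow_inj hM cs h
      omega
    rw [ruleS2 hM cs T hone hmul hquad (k - 1) (by omega)]
    rw [ruleS3 hM cs T hone hmul hquad (-k) (by omega)]
    rw [ruleS3 hM cs T hone hmul hquad (-k - 1) (by omega)]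
    simp only [neg_neg]
    simp only [map_add, map_smul, Finsupp.add_apply, Finsupp.smul_apply, smul_eq_mul,
      reprT_self T, reprT_ne T h1, reprT_ne T h2, reprT_ne T h3]
    ring

lemma calc_odd_neg (k : ℤ) (hk : k ≤ -1) :
    T.repr (T (cs.simple 0) * (T (cs.simple 1) *
        (T (cs.simple 0) * T ((pel cs) ^ k * cs.simple 0))))
      ((pel cs) ^ k * cs.simple 0) = 0 := by
  rw [ruleS3 hM cs T hone hmul hquad k hk]
  rw [ruleT1 hM cs T hone hmul hquad (-k) (by omega)]
  simp only [neg_neg]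
  rw [ruleS3 hM cs T hone hmul hquad (k - 1) (by omega)]
  exact reprT_ne T (p_ne_ps hM cs (-(k - 1)) k)

lemma calc_odd_zero (k : ℤ) (hk0 : 0 ≤ k) (hk1 : k ≤ 0) :
    T.repr (T (cs.simple 0) * (T (cs.simple 1) *
        (T (cs.simple 0) * T ((pel cs) ^ k * cs.simple 0))))
      ((pel cs) ^ k * cs.simple 0) = 0 := by
  have h1 : (pel cs) ^ (-(k - 1)) ≠ (pel cs) ^ k * cs.simple 0 := p_ne_ps hM cs (-(k - 1)) k
  have h2 : (pel cs) ^ (-(-k - 1)) * cs.simple 0 ≠ (pel cs) ^ k * cs.simple 0 := by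
    intro h
    have := ps_inj hM cs h
    omega
  rw [ruleS4 hM cs T hone hmul hquad k hk0]
  simp only [mul_add, mul_smul_comm]
  rw [ruleT1 hM cs T hone hmul hquad (-k) (by omega)]
  rw [ruleT3 hM cs T hone hmul hquad k (by omega)]
  simp only [neg_neg, mul_add, mul_smul_comm]
  rw [ruleS3 hM cs T hone hmul hquad (k - 1) (by omega)]
  rw [ruleS1 hM cs T hone hmul hquad (-k - 1) (by omega)]
  simp only [map_add, map_smul, Finsupp.add_apply, Finsupp.smul_apply, smul_eq_mul,
    reprT_ne T h1, reprT_ne T h2]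
  ring

lemma calc_odd_pos (k : ℤ) (hk : 1 ≤ k) :
    T.repr (T (cs.simple 0) * (T (cs.simple 1) *
        (T (cs.simple 0) * T ((pel cs) ^ k * cs.simple 0))))
      ((pel cs) ^ k * cs.simple 0) = X ^ 2 - X := by
  have h1 : (pel cs) ^ (-(k - 1)) ≠ (pel cs) ^ k * cs.simple 0 := p_ne_ps hM cs (-(k - 1)) k
  have h2 : (pel cs) ^ (k - 1) * cs.simple 0 ≠ (pel cs) ^ k * cs.simple 0 := by
    intro h
    have := ps_inj hM cs h
    omega
  have h3 : (pel cs) ^ (-(-k - 1)) * cs.simple 0 ≠ (pel cs) ^ k * cs.simple 0 := by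
    intro h
    have := ps_inj hM cs h
    omega
  rw [ruleS4 hM cs T hone hmul hquad k (by omega)]
  simp only [mul_add, mul_smul_comm]
  rw [ruleT2 hM cs T hone hmul hquad (-k) (by omega)]
  rw [ruleT3 hM cs T hone hmul hquad k (by omega)]
  simp only [neg_neg, mul_add, mul_smul_comm]
  rw [ruleS4 hM cs T hone hmul hquad (k - 1) (by omega)]
  rw [ruleS1 hM cs T hone hmul hquad (-k) (by omega)]
  rw [ruleS1 hM cs T hone hmul hquad (-k - 1) (by omega)]
  simp only [neg_neg]
  simp only [map_add, map_smul, Finsupp.add_apply, Finsupp.smul_apply, smul_eq_mul,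
    reprT_self T, reprT_ne T h1, reprT_ne T h2, reprT_ne T h3]
  ring

lemma dichotomy (z : W) :
    T.repr (T (cs.simple 0) * (T (cs.simple 1) * (T (cs.simple 0) * T z))) z = 0 ∨
    T.repr (T (cs.simple 0) * (T (cs.simple 1) * (T (cs.simple 0) * T z))) z = X ^ 2 - X := by
  rcases Nat.even_or_odd (cs.length z) with h | h
  · obtain ⟨hzeq, -⟩ := (master hM cs z).1 h
    obtain ⟨k, rfl⟩ : ∃ k : ℤ, z = (pel cs) ^ k := ⟨_, hzeq⟩
    rcases le_or_gt k 0 with h0 | h0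
    · exact Or.inl (calc_even_nonpos hM cs T hone hmul hquad k h0)
    · exact Or.inr (calc_even_pos hM cs T hone hmul hquad k (by omega))
  · obtain ⟨hzeq, -⟩ := (master hM cs z).2 h
    obtain ⟨k, rfl⟩ : ∃ k : ℤ, z = (pel cs) ^ k * cs.simple 0 := ⟨_, hzeq⟩
    rcases le_or_gt k (-1) with h0 | h0
    · exact Or.inl (calc_odd_neg hM cs T hone hmul hquad k h0)
    · rcases le_or_gt k 0 with h1 | h1
      · exact Or.inl (calc_odd_zero hM cs T hone hmul hquad k (by omega) h1)
      · exact Or.inr (calc_odd_pos hM cs T hone hmul hquad k (by omega))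

end Hecke

end

end InfDihedralAux

/-- In the infinite dihedral Coxeter group, for `w = s₁s₂s₁` one has
`d(w) = max_{z ∈ 𝔈(w)} deg N_{w,z,z} = 2 < 3 = l(w)`. -/
theorem stmt_9 {W H : Type*} [Group W] {M : CoxeterMatrix (Fin 2)} (hM : M 0 1 = 0)
    (cs : CoxeterSystem M W)
    [Ring H] [Algebra (Polynomial ℤ) H] (T : Module.Basis W (Polynomial ℤ) H)
    (hone : T 1 = 1)
    (hmul : ∀ y y' : W, cs.length (y * y') = cs.length y + cs.length y' →
      T y * T y' = T (y * y'))
    (hquad : ∀ i : Fin 2, (T (cs.simple i) + 1) *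
      (T (cs.simple i) - algebraMap (Polynomial ℤ) H X) = 0)
    (w : W) (hw : w = cs.simple 0 * cs.simple 1 * cs.simple 0) :
    (∀ z : W, heckeN T w z z ≠ 0 → (heckeN T w z z).natDegree ≤ 2) ∧
    (∃ z : W, heckeN T w z z ≠ 0 ∧ (heckeN T w z z).natDegree = 2) ∧
    cs.length w = 3 := by
  classical
  open InfDihedralAux in
  -- normal form of w
  have hw1 : w = pel cs ^ (1 : ℤ) * cs.simple 0 := by
    rw [hw, zpow_one]
    rfl
  -- decomposition of T w * T z
  have hsts : cs.simple 1 * cs.simple 0 = pel cs ^ (-1 : ℤ) := by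
    rw [zpow_neg, zpow_one, pel, mul_inv_rev, cs.inv_simple, cs.inv_simple]
  have h1 : T (cs.simple 1) * T (cs.simple 0) = T (cs.simple 1 * cs.simple 0) := by
    apply hmul
    rw [hsts, len_p hM cs, cs.length_simple, cs.length_simple]
    rfl
  have h2 : T (cs.simple 0) * T (cs.simple 1 * cs.simple 0) =
      T (cs.simple 0 * (cs.simple 1 * cs.simple 0)) := by
    apply hmul
    have e2 : cs.simple 0 * (cs.simple 1 * cs.simple 0) = pel cs ^ (1 : ℤ) * cs.simple 0 := by
      rw [zpow_one, pel, mul_assoc]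
    rw [e2, len_ps hM cs, hsts, len_p hM cs, cs.length_simple]
    rfl
  have hTw : T w = T (cs.simple 0) * (T (cs.simple 1) * T (cs.simple 0)) := by
    rw [h1, h2, hw, mul_assoc]
  have hTwz : ∀ z : W, T w * T z =
      T (cs.simple 0) * (T (cs.simple 1) * (T (cs.simple 0) * T z)) := by
    intro z
    rw [hTw, mul_assoc, mul_assoc]
  have hN : ∀ z : W, heckeN T w z z =
      T.repr (T (cs.simple 0) * (T (cs.simple 1) * (T (cs.simple 0) * T z))) z := by
    intro z
    rw [heckeN, hTwz]
  have hdeg : ((X : Polynomial ℤ) ^ 2 - X).natDegree = 2 := by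
    compute_degree!
  have hne0 : ((X : Polynomial ℤ) ^ 2 - X) ≠ 0 := by
    intro h
    have := congrArg (fun q => Polynomial.coeff q 2) h
    simp [Polynomial.coeff_X] at this
  refine ⟨?_, ?_, ?_⟩
  · intro z hz
    rcases dichotomy hM cs T hone hmul hquad z with h | h
    · rw [hN z] at hz
      exact absurd h hz
    · rw [hN z, h, hdeg]
  · refine ⟨pel cs ^ (1 : ℤ), ?_, ?_⟩
    · rw [hN, calc_even_pos hM cs T hone hmul hquad 1 le_rfl]
      exact hne0
    · rw [hN, calc_even_pos hM cs T hone hmul hquad 1 le_rfl, hdeg]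
  · rw [hw1, len_ps hM cs]
    rfl
end
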